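/- arXiv:1810.12489 — 3 statements merged into one kernel-verified Lean document; each statement's English description precedes it below -/
import Mathlib

section
/- Let G be a group with finite generating set S, and let h : G → ℤ be a group homomorphism such that for every s ∈ S, h(s) ∈ {1, -1, n-1, 1-n} for a fixed integer n ≥ 3. Then for any f ∈ G, writing h(f) = q(n-1) + r with 0 ≤ |r| < (n-1)/2, the word length of f with respect to S is at least |q| + |r|. -/
/- Word-length lower bound from the homomorphism h : G → ℤ whose values on
generators lie in {1, -1, n-1, 1-n}.  The word length of f with respect to S
is at least |q| + |r| where h(f) = q(n-1) + r, 2|r| < n-1.  Word length is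
expressed via arbitrary words: any list of generators (or their inverses)
whose product is f has length at least |q| + |r|. -/
theorem stmt_1 {G : Type*} [Group G] (S : Finset G) (n : ℤ) (hn : 3 ≤ n)
    (h : G → ℤ) (hhom : ∀ x y : G, h (x * y) = h x + h y)
    (hS : ∀ s ∈ S, h s = 1 ∨ h s = -1 ∨ h s = n - 1 ∨ h s = 1 - n)
    (f : G) (q r : ℤ) (hf : h f = q * (n - 1) + r) (hr : 2 * |r| < n - 1)
    (L : List G) (hL : ∀ x ∈ L, x ∈ S ∨ x⁻¹ ∈ S) (hprod : L.prod = f) :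
    |q| + |r| ≤ (L.length : ℤ) := by
  have h1 : h 1 = 0 := by have := hhom 1 1; simp at this; omega
  have hinv : ∀ x : G, h x⁻¹ = -h x := by
    intro x
    have := hhom x x⁻¹
    simp [h1] at this
    omega
  have hvals : ∀ x ∈ L, h x = 1 ∨ h x = -1 ∨ h x = n - 1 ∨ h x = 1 - n := by
    intro x hx
    rcases hL x hx with hx' | hx'
    · exact hS x hx'
    · have := hS _ hx'
      rw [hinv] at this
      omega
  -- key: existence of A B with h L.prod = A*(n-1)+B and |A|+|B| ≤ length
  have key : ∀ M : List G, (∀ x ∈ M, h x = 1 ∨ h x = -1 ∨ h x = n - 1 ∨ h x = 1 - n) →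
      ∃ A B : ℤ, h M.prod = A * (n - 1) + B ∧ |A| + |B| ≤ (M.length : ℤ) := by
    intro M
    induction M with
    | nil => intro _; exact ⟨0, 0, by simp [h1], by simp⟩
    | cons x t ih =>
      intro hM
      obtain ⟨A, B, hAB, hlen⟩ := ih (fun y hy => hM y (List.mem_cons_of_mem _ hy))
      have hx := hM x List.mem_cons_self
      have hprod : h (x :: t).prod = h x + h t.prod := by
        rw [List.prod_cons, hhom]
      rcases hx with hx | hx | hx | hx
      · refine ⟨A, B + 1, by rw [hprod, hAB, hx]; ring, ?_⟩
        have := abs_add_le B 1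
        simp only [List.length_cons]
        push_cast
        have : |B + 1| ≤ |B| + 1 := by simpa using abs_add_le B 1
        omega
      · refine ⟨A, B - 1, by rw [hprod, hAB, hx]; ring, ?_⟩
        simp only [List.length_cons]
        push_cast
        have : |B - 1| ≤ |B| + 1 := by
          calc |B - 1| ≤ |B| + |(-1 : ℤ)| := abs_sub B 1
          _ = |B| + 1 := by norm_num
        omega
      · refine ⟨A + 1, B, by rw [hprod, hAB, hx]; ring, ?_⟩
        simp only [List.length_cons]
        push_cast
        have : |A + 1| ≤ |A| + 1 := by simpa using abs_add_le A 1
        omega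
      · refine ⟨A - 1, B, by rw [hprod, hAB, hx]; ring, ?_⟩
        simp only [List.length_cons]
        push_cast
        have : |A - 1| ≤ |A| + 1 := by
          calc |A - 1| ≤ |A| + |(-1 : ℤ)| := abs_sub A 1
          _ = |A| + 1 := by norm_num
        omega
  obtain ⟨A, B, hAB, hlen⟩ := key L hvals
  rw [hprod, hf] at hAB
  -- arithmetic: q*(n-1)+r = A*(n-1)+B
  set k : ℤ := q - A with hk
  have hB : B = r + k * (n - 1) := by rw [hk]; linarith [hAB]
  have hq : |q| ≤ |A| + |k| := by
    calc |q| = |A + k| := by rw [hk]; ring_nf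
    _ ≤ |A| + |k| := abs_add_le A k
  rcases eq_or_ne k 0 with hk0 | hk0
  · rw [hk0] at hB hq
    simp at hB hq
    have : |B| = |r| := by rw [hB]
    omega
  · have hk1 : 1 ≤ |k| := by
      rcases abs_pos.mpr hk0 with hp
      omega
    have hBlb : |k| * (n - 1) - |r| ≤ |B| := by
      have h1 : |k * (n - 1)| ≤ |B| + |r| := by
        calc |k * (n - 1)| = |B - r| := by rw [hB]; ring_nf
        _ ≤ |B| + |r| := abs_sub B r
      rw [abs_mul, abs_of_pos (by omega : (0:ℤ) < n - 1)] at h1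
      linarith
    -- |q| + |r| ≤ |A| + |k| + |r| ≤ |A| + |B|, since |B| ≥ |k|(n-1)-|r| and |k|(n-2) ≥ 2|r|
    have hknz : |k| + 2 * |r| ≤ |k| * (n - 1) := by
      nlinarith [abs_nonneg r, abs_nonneg k]
    linarith
end

section
/- The real number λ = √13 + 2√(2√13 + 7) + 4 is an eigenvalue of the 5×5 matrix A = [[3,2,0,0,2],[6,3,6,4,0],[4,2,3,2,0],[12,8,6,3,6],[6,4,4,2,3]], i.e., det(A - λI) = 0. -/
/- The train-track transition matrix A, with real entries. -/
def trainTrackMatrixR : Matrix (Fin 5) (Fin 5) ℝ :=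
  !![3, 2, 0, 0, 2;
     6, 3, 6, 4, 0;
     4, 2, 3, 2, 0;
     12, 8, 6, 3, 6;
     6, 4, 4, 2, 3]

/- λ = √13 + 2√(2√13 + 7) + 4 is an eigenvalue of A: det(A - λI) = 0. -/
theorem stmt_10 :
    (trainTrackMatrixR -
        (Real.sqrt 13 + 2 * Real.sqrt (2 * Real.sqrt 13 + 7) + 4) •
          (1 : Matrix (Fin 5) (Fin 5) ℝ)).det = 0 := by
  rw [← Matrix.exists_mulVec_eq_zero_iff]
  set s : ℝ := Real.sqrt 13 with hsdef
  set t : ℝ := Real.sqrt (2 * Real.sqrt 13 + 7) with htdef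
  have hs : s ^ 2 = 13 := Real.sq_sqrt (by norm_num)
  have ht : t ^ 2 = 2 * s + 7 := by
    rw [htdef, Real.sq_sqrt]
    nlinarith [Real.sqrt_nonneg (13:ℝ)]
  refine ⟨![3 + s - 5*t + s*t, -5 - s + 7*t - s*t, 1 + s + 3*t - s*t,
           1 - s - t + s*t, 4], ?_, ?_⟩
  · intro h
    have h4 := congrFun h 4
    simp at h4
  · funext i
    fin_cases i <;>
      simp only [Matrix.mulVec, dotProduct, Fin.sum_univ_five, trainTrackMatrixR,
        Matrix.sub_apply, Matrix.smul_apply, Matrix.one_apply, Matrix.cons_val',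
        Matrix.cons_val_zero, Matrix.cons_val_one, Matrix.head_cons, Matrix.head_fin_const,
        Matrix.empty_val', Matrix.cons_val_fin_one, Matrix.cons_val_succ,
        Matrix.of_apply, Pi.zero_apply, smul_eq_mul] <;>
      norm_num [Matrix.one_apply, Matrix.cons_val_two, Matrix.cons_val_three, Matrix.cons_val_four, Fin.ext_iff, show ((3:Fin 5):ℕ) = 3 from rfl, show ((4:Fin 5):ℕ) = 4 from rfl]
    · linear_combination (10 - 2*s) * ht + (-5 - t) * hs
    · linear_combination (-14 + 2*s) * ht + (5 + t) * hs
    · linear_combination (-6 + 2*s) * ht + (3 + t) * hs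
    · linear_combination (2 - 2*s) * ht + (-3 - t) * hs
    · linear_combination (0:ℝ) * ht
end

section
/- Let n ≥ 3 and k ≥ 1 with m_k = ∑_{i=0}^k n^i. For any integer m with 5m < k, writing m_k - 5m = q(n-1) + r with 2|r| < n-1, we have |q| + |r| > (m_k - k)/(n-1). In particular the minimal value of |q|+|r| over representations of m_k - 5m exceeds that of m_k - k, which is exactly divisible by n-1. -/
/- For m_k = ∑_{i=0}^k n^i and any integer m with 5m < k, writing
m_k - 5m = q(n-1) + r with 2|r| < n-1, we have |q| + |r| > (m_k - k)/(n-1). -/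
theorem stmt_14 (n : ℤ) (k : ℕ) (hn : 3 ≤ n) (hk : 1 ≤ k) (m q r : ℤ)
    (hm : 5 * m < (k : ℤ))
    (hqr : (∑ i ∈ Finset.range (k + 1), n ^ i) - 5 * m = q * (n - 1) + r)
    (hr : 2 * |r| < n - 1) :
    ((∑ i ∈ Finset.range (k + 1), n ^ i : ℤ) - k : ℝ) / ((n : ℝ) - 1) <
      ((|q| + |r| : ℤ) : ℝ) := by
  set S : ℤ := ∑ i ∈ Finset.range (k + 1), n ^ i with hS
  have hn1 : (0:ℤ) < n - 1 := by linarith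
  have key : S - (k : ℤ) < (|q| + |r|) * (n - 1) := by
    have h1 : q * (n - 1) ≤ |q| * (n - 1) :=
      mul_le_mul_of_nonneg_right (le_abs_self q) (by linarith)
    have h2 : r ≤ |r| * (n - 1) := by
      have h3 : |r| ≤ |r| * (n - 1) := le_mul_of_one_le_right (abs_nonneg r) (by linarith)
      linarith [le_abs_self r]
    nlinarith [hqr, hm]
  have hn' : (3:ℝ) ≤ (n:ℝ) := by exact_mod_cast hn
  rw [div_lt_iff₀ (by linarith : (0:ℝ) < (n:ℝ) - 1)]
  exact_mod_cast key
end
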